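/- Fix m ≥ 4 and parameters a, b, c_1, …, c_m ∈ ℂ. In the ℂ-algebra of ℂ-linear endomorphisms of ℂ[x_1, …, x_m], with θ_i = x_i∂_i, θ = ∑_k θ_k, S_i = θ_i(θ_i + c_i − 1), ℓ_i = S_i − x_i(θ + a)(θ + b), and ℓ_{ij} = x_jℓ_i − x_iℓ_j, the following identity holds whenever {i, j} ∩ {i', j'} = ∅ (i ≠ j, i' ≠ j'): x_{i'}²x_{j'}∂_{i'}² ∘ ℓ_{ij} − x_i²x_j∂_i² ∘ ℓ_{i'j'} = x_{j'}S_j ∘ ℓ_{ii'} − x_{i'}S_i ∘ ℓ_{jj'} − c_{i'}x_{j'}θ_{i'} ∘ ℓ_{ij} + c_ix_jθ_i ∘ ℓ_{i'j'}. -/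

import Mathlib

open MvPolynomial

noncomputable section

/-- Multiplication by the variable `x_i`, as a `ℂ`-linear endomorphism of
`ℂ[x_1, …, x_m]`. -/
def xmul (m : ℕ) (i : Fin m) : Module.End ℂ (MvPolynomial (Fin m) ℂ) :=
  LinearMap.mulLeft ℂ (X i)

/-- The `i`-th partial derivative `∂_i`, as a `ℂ`-linear endomorphism. -/
def dOp (m : ℕ) (i : Fin m) : Module.End ℂ (MvPolynomial (Fin m) ℂ) :=
  (pderiv i).toLinearMap

/-- The Euler operator `θ_i = x_i ∂_i`. -/
def thetaOp (m : ℕ) (i : Fin m) : Module.End ℂ (MvPolynomial (Fin m) ℂ) :=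
  xmul m i * dOp m i

/-- `θ = θ_1 + ⋯ + θ_m`. -/
def ThetaOp (m : ℕ) : Module.End ℂ (MvPolynomial (Fin m) ℂ) :=
  ∑ i, thetaOp m i

/-- A scalar `λ ∈ ℂ` acting as `λ · id`. -/
def cOp (m : ℕ) (z : ℂ) : Module.End ℂ (MvPolynomial (Fin m) ℂ) :=
  algebraMap ℂ (Module.End ℂ (MvPolynomial (Fin m) ℂ)) z

/-- `S_i = θ_i (θ_i + c_i − 1)`. -/
def sOp (m : ℕ) (c : Fin m → ℂ) (i : Fin m) :
    Module.End ℂ (MvPolynomial (Fin m) ℂ) :=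
  thetaOp m i * (thetaOp m i + cOp m (c i) - 1)

/-- The `i`-th Lauricella `F_C` operator
`ℓ_i = θ_i(θ_i + c_i − 1) − x_i (θ + a)(θ + b)`. -/
def ell (m : ℕ) (a b : ℂ) (c : Fin m → ℂ) (i : Fin m) :
    Module.End ℂ (MvPolynomial (Fin m) ℂ) :=
  sOp m c i - xmul m i * ((ThetaOp m + cOp m a) * (ThetaOp m + cOp m b))

/-- `ℓ_{ij} = x_j ℓ_i − x_i ℓ_j`. -/
def ellIJ (m : ℕ) (a b : ℂ) (c : Fin m → ℂ) (i j : Fin m) :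
    Module.End ℂ (MvPolynomial (Fin m) ℂ) :=
  xmul m j * ell m a b c i - xmul m i * ell m a b c j

lemma xmul_comm (m : ℕ) (k l : Fin m) : xmul m k * xmul m l = xmul m l * xmul m k := by
  ext p
  simp [xmul, mul_left_comm]

lemma dOp_xmul_self (m : ℕ) (k : Fin m) :
    dOp m k * xmul m k = xmul m k * dOp m k + 1 := by
  ext p
  simp [dOp, xmul, pderiv_mul, add_comm]

lemma theta_sq (m : ℕ) (k : Fin m) :
    thetaOp m k * thetaOp m k = xmul m k ^ 2 * dOp m k ^ 2 + thetaOp m k := by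
  calc xmul m k * dOp m k * (xmul m k * dOp m k)
      = xmul m k * ((dOp m k * xmul m k) * dOp m k) := by noncomm_ring
    _ = xmul m k * ((xmul m k * dOp m k + 1) * dOp m k) := by rw [dOp_xmul_self]
    _ = xmul m k ^ 2 * dOp m k ^ 2 + thetaOp m k := by rw [thetaOp]; noncomm_ring

lemma xxd (m : ℕ) (k l : Fin m) :
    xmul m k ^ 2 * xmul m l * dOp m k ^ 2 =
      xmul m l * (thetaOp m k * thetaOp m k) - xmul m l * thetaOp m k := by
  have h : xmul m k ^ 2 * xmul m l = xmul m l * xmul m k ^ 2 := by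
    rw [pow_two, mul_assoc, xmul_comm, ← mul_assoc, xmul_comm, mul_assoc]
  rw [h, mul_assoc, ← mul_sub]
  refine congrArg (HMul.hMul (xmul m l)) ?_
  rw [theta_sq]; ring_nf
  noncomm_ring

lemma ellIJ_eq (m : ℕ) (a b : ℂ) (c : Fin m → ℂ) (i j : Fin m) :
    ellIJ m a b c i j = xmul m j * sOp m c i - xmul m i * sOp m c j := by
  rw [ellIJ, ell, ell, mul_sub, mul_sub]
  simp only [← mul_assoc]
  rw [xmul_comm m j i]
  abel

lemma xmul_monomial (m : ℕ) (k : Fin m) (s : Fin m →₀ ℕ) (r : ℂ) :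
    xmul m k (monomial s r) = monomial (Finsupp.single k 1 + s) r := by
  simp [xmul, X, monomial_mul]

lemma thetaOp_monomial (m : ℕ) (k : Fin m) (s : Fin m →₀ ℕ) (r : ℂ) :
    thetaOp m k (monomial s r) = monomial s ((s k : ℂ) * r) := by
  rcases Nat.eq_zero_or_pos (s k) with h | h
  · simp [thetaOp, Module.End.mul_apply, dOp, pderiv_monomial, h]
  · rw [thetaOp, Module.End.mul_apply]
    show xmul m k ((pderiv k) ((monomial s) r)) = _
    rw [pderiv_monomial, xmul_monomial]
    have he : Finsupp.single k 1 + (s - Finsupp.single k 1) = s := by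
      ext l
      by_cases hl : k = l
      · subst hl; simp [Finsupp.single_apply, Nat.add_sub_cancel' h]
      · simp [Finsupp.single_apply, hl]
    rw [he, mul_comm]

lemma thetaOp_mono1 (m : ℕ) (k : Fin m) (s : Fin m →₀ ℕ) :
    thetaOp m k (monomial s 1) = ((s k : ℂ)) • monomial s (1 : ℂ) := by
  rw [thetaOp_monomial, smul_monomial, smul_eq_mul]

lemma cOp_apply (m : ℕ) (z : ℂ) (p : MvPolynomial (Fin m) ℂ) :
    cOp m z p = z • p := rfl

lemma sOp_mono1 (m : ℕ) (c : Fin m → ℂ) (k : Fin m) (s : Fin m →₀ ℕ) :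
    sOp m c k (monomial s 1) =
      ((s k : ℂ) * ((s k : ℂ) + c k - 1)) • monomial s (1 : ℂ) := by
  rw [sOp, Module.End.mul_apply, LinearMap.sub_apply, LinearMap.add_apply,
    Module.End.one_apply, thetaOp_mono1, cOp_apply, map_sub, map_add, map_smul, map_smul,
    thetaOp_mono1]
  rw [smul_smul, smul_smul]
  rw [← add_smul, ← sub_smul]
  congr 1
  ring


/-- the identity (dehomogenization of `sp(T_{ij}, T_{i'j'})`)
`x_{i'}²x_{j'}∂_{i'}² ℓ_{ij} − x_i²x_j∂_i² ℓ_{i'j'}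
  = x_{j'} S_j ℓ_{ii'} − x_{i'} S_i ℓ_{jj'} − c_{i'} x_{j'} θ_{i'} ℓ_{ij}
    + c_i x_j θ_i ℓ_{i'j'}` for `{i,j} ∩ {i',j'} = ∅`, `i ≠ j`, `i' ≠ j'`. -/
theorem lauricella_spair_tij_tij' (m : ℕ) (hm : 4 ≤ m) (a b : ℂ)
    (c : Fin m → ℂ) (i j i' j' : Fin m)
    (hij : i ≠ j) (hij' : i' ≠ j')
    (hdisj : ({i, j} : Set (Fin m)) ∩ {i', j'} = ∅) :
    xmul m i' ^ 2 * xmul m j' * dOp m i' ^ 2 * ellIJ m a b c i j -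
      xmul m i ^ 2 * xmul m j * dOp m i ^ 2 * ellIJ m a b c i' j' =
    xmul m j' * sOp m c j * ellIJ m a b c i i' -
      xmul m i' * sOp m c i * ellIJ m a b c j j' -
      cOp m (c i') * xmul m j' * thetaOp m i' * ellIJ m a b c i j +
      cOp m (c i) * xmul m j * thetaOp m i * ellIJ m a b c i' j' := by
  have key : ∀ x y : Fin m, x ∈ ({i, j} : Set (Fin m)) → y ∈ ({i', j'} : Set (Fin m)) → x ≠ y := by
    intro x y hx hy hxy
    have : x ∈ ({i, j} : Set (Fin m)) ∩ {i', j'} := ⟨hx, hxy ▸ hy⟩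
    rw [hdisj] at this
    exact this
  have hii' : i ≠ i' := key i i' (Or.inl rfl) (Or.inl rfl)
  have hij'2 : i ≠ j' := key i j' (Or.inl rfl) (Or.inr rfl)
  have hji' : j ≠ i' := key j i' (Or.inr rfl) (Or.inl rfl)
  have hjj' : j ≠ j' := key j j' (Or.inr rfl) (Or.inr rfl)
  rw [xxd m i' j', xxd m i j]
  simp only [ellIJ_eq]
  apply LinearMap.ext
  intro p
  induction p using MvPolynomial.induction_on' with
  | add p q hp hq => simp only [map_add, hp, hq]
  | monomial u r =>
    have hr : (monomial u) r = r • monomial u (1 : ℂ) := by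
      rw [smul_monomial, smul_eq_mul, mul_one]
    rw [hr]
    simp only [map_smul, map_sub, map_add, Module.End.mul_apply, LinearMap.sub_apply, LinearMap.add_apply,
      LinearMap.smul_apply, cOp_apply, sOp_mono1, thetaOp_mono1, xmul_monomial,
      map_smul, smul_smul, Finsupp.coe_add, Pi.add_apply, Finsupp.single_apply,
      hij, hij', hii', hij'2, hji', hjj', Ne.symm hij, Ne.symm hij', Ne.symm hii',
      Ne.symm hij'2, Ne.symm hji', Ne.symm hjj', if_false,
      Nat.cast_add, Nat.cast_zero, zero_add, add_zero]
    rw [show ((Finsupp.single j' 1 : Fin m →₀ ℕ) + (Finsupp.single j 1 + u)) = (Finsupp.single j 1 + (Finsupp.single j' 1 + u)) from by rw [add_left_comm]]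
    rw [show ((Finsupp.single j' 1 : Fin m →₀ ℕ) + (Finsupp.single i 1 + u)) = (Finsupp.single i 1 + (Finsupp.single j' 1 + u)) from by rw [add_left_comm]]
    rw [show ((Finsupp.single i' 1 : Fin m →₀ ℕ) + (Finsupp.single j' 1 + u)) = (Finsupp.single j' 1 + (Finsupp.single i' 1 + u)) from by rw [add_left_comm]]
    rw [show ((Finsupp.single i' 1 : Fin m →₀ ℕ) + (Finsupp.single j 1 + u)) = (Finsupp.single j 1 + (Finsupp.single i' 1 + u)) from by rw [add_left_comm]]
    rw [show ((Finsupp.single j 1 : Fin m →₀ ℕ) + (Finsupp.single j' 1 + u)) = (Finsupp.single j' 1 + (Finsupp.single j 1 + u)) from by rw [add_left_comm]]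
    rw [show ((Finsupp.single j 1 : Fin m →₀ ℕ) + (Finsupp.single i' 1 + u)) = (Finsupp.single i' 1 + (Finsupp.single j 1 + u)) from by rw [add_left_comm]]
    match_scalars <;> ring

end
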